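/- (Proposition 2, mean) Let X be a finite set of species, 𝔽 a finite set of features, α : X → 2^𝔽, ν : 𝔽 → ℝ≥0, and let φ be the associated feature diversity function. Under the g-FOB model with extinction probabilities ε : X → ℝ, for each species x ∈ X the generalized HED score satisfies ψ_x = Σ_{f ∈ α(x)} ν(f) · ∏_{y ∈ X \ {x} : f ∈ α(y)} ε_y. -/
import Mathlib


open Finset

/-- g-FOB weight of the survivor set `S ⊆ X \ {x}`:
each species `y ≠ x` independently survives with probability `1 - ε y`. -/
noncomputable def gfobWeight {X : Type*} [Fintype X] [DecidableEq X]
    (ε : X → ℝ) (x : X) (S : Finset X) : ℝ :=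
  (∏ y ∈ S, (1 - ε y)) * ∏ y ∈ Finset.univ.erase x \ S, ε y

/-- generalized HED score `ψ_x`: the g-FOB expectation of
`Δ_φ(S, x) = φ(S ∪ {x}) - φ(S)`. -/
noncomputable def psi {X : Type*} [Fintype X] [DecidableEq X]
    (ε : X → ℝ) (φ : Finset X → ℝ) (x : X) : ℝ :=
  ∑ S ∈ (Finset.univ.erase x).powerset,
    gfobWeight ε x S * (φ (S ∪ {x}) - φ S)

/-- generalized HEDGE score `ψ'_x`: the expectation of
`Δ'_φ(S, x) = φ(S ∪ {x}) - φ(S ∪ I_x)`, averaging also over the fate `I_x` of `x`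
(`I_x = {x}` with probability `1 - ε x`, `I_x = ∅` with probability `ε x`). -/
noncomputable def psi' {X : Type*} [Fintype X] [DecidableEq X]
    (ε : X → ℝ) (φ : Finset X → ℝ) (x : X) : ℝ :=
  ∑ S ∈ (Finset.univ.erase x).powerset,
    gfobWeight ε x S *
      ((1 - ε x) * (φ (S ∪ {x}) - φ (S ∪ {x})) +
        ε x * (φ (S ∪ {x}) - φ (S ∪ ∅)))

/-- Feature diversity: `φ(S)` is the sum of the weights `ν f` of all features `f`
present in at least one species of `S`. -/
noncomputable def featDiv {X 𝔽 : Type*} [DecidableEq 𝔽]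
    (α : X → Finset 𝔽) (ν : 𝔽 → ℝ) (S : Finset X) : ℝ :=
  ∑ f ∈ S.biUnion α, ν f

/-- Proposition 2 (mean): under the g-FOB model, the generalized HED score of the
feature diversity function satisfies
`ψ_x = Σ_{f ∈ α(x)} ν(f) · Π_{y ∈ X \ {x} : f ∈ α(y)} ε_y`. -/
theorem hed_featDiv {X 𝔽 : Type*} [Fintype X] [DecidableEq X] [DecidableEq 𝔽]
    (α : X → Finset 𝔽) (ν : 𝔽 → ℝ) (hν : ∀ f, 0 ≤ ν f) (ε : X → ℝ) (x : X) :
    psi ε (featDiv α ν) x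
      = ∑ f ∈ α x, ν f * ∏ y ∈ (Finset.univ.erase x).filter (fun y => f ∈ α y), ε y := by
  classical
  set Y := Finset.univ.erase x with hY
  have hdiff : ∀ S : Finset X, featDiv α ν (S ∪ {x}) - featDiv α ν S
      = ∑ f ∈ α x, (if f ∈ S.biUnion α then (0:ℝ) else ν f) := by
    intro S
    have hb : (S ∪ {x}).biUnion α = S.biUnion α ∪ α x := by
      ext g
      simp only [Finset.mem_biUnion, Finset.mem_union, Finset.mem_singleton]
      constructor
      · rintro ⟨y, hy | rfl, hg⟩
        · exact Or.inl ⟨y, hy, hg⟩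
        · exact Or.inr hg
      · rintro (⟨y, hy, hg⟩ | hg)
        · exact ⟨y, Or.inl hy, hg⟩
        · exact ⟨x, Or.inr rfl, hg⟩
    have hd : Disjoint (S.biUnion α) (α x \ S.biUnion α) := Finset.disjoint_sdiff
    have h1 : featDiv α ν (S ∪ {x}) = featDiv α ν S + ∑ f ∈ α x \ S.biUnion α, ν f := by
      unfold featDiv
      rw [hb, ← Finset.union_sdiff_self_eq_union, Finset.sum_union hd]
    rw [h1, add_sub_cancel_left, Finset.sdiff_eq_filter, Finset.sum_filter]
    exact Finset.sum_congr rfl fun f _ => by rw [ite_not]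
  unfold psi
  have h1 : ∀ S ∈ Y.powerset, gfobWeight ε x S * (featDiv α ν (S ∪ {x}) - featDiv α ν S)
      = ∑ f ∈ α x, (if f ∈ S.biUnion α then 0 else ν f * gfobWeight ε x S) := by
    intro S _
    rw [hdiff, Finset.mul_sum]
    refine Finset.sum_congr rfl fun f _ => ?_
    split <;> ring
  rw [Finset.sum_congr rfl h1, Finset.sum_comm]
  refine Finset.sum_congr rfl fun f hf => ?_
  set A := Y.filter (fun y => f ∈ α y) with hA
  set B := Y.filter (fun y => f ∉ α y) with hB
  have hpow : Y.powerset.filter (fun S => ¬ f ∈ S.biUnion α) = B.powerset := by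
    ext S
    simp only [Finset.mem_filter, Finset.mem_powerset, Finset.mem_biUnion, not_exists, hB,
      Finset.subset_iff, Finset.mem_filter]
    constructor
    · rintro ⟨h1, h2⟩ y hy
      exact ⟨h1 hy, fun hg => h2 y ⟨hy, hg⟩⟩
    · intro h
      exact ⟨fun y hy => (h hy).1, fun y hyg => (h hyg.1).2 hyg.2⟩
  rw [Finset.sum_ite, Finset.sum_const_zero, zero_add, hpow]
  have hw : ∀ S ∈ B.powerset, ν f * gfobWeight ε x S
      = ν f * ((∏ y ∈ A, ε y) * ((∏ y ∈ S, (1 - ε y)) * ∏ y ∈ B \ S, ε y)) := by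
    intro S hS
    rw [Finset.mem_powerset] at hS
    have hYS : Y \ S = A ∪ (B \ S) := by
      ext y
      simp only [Finset.mem_sdiff, Finset.mem_union, Finset.mem_filter, hA, hB]
      constructor
      · rintro ⟨hy, hns⟩
        by_cases h : f ∈ α y
        · exact Or.inl ⟨hy, h⟩
        · exact Or.inr ⟨⟨hy, h⟩, hns⟩
      · rintro (⟨hy, h⟩ | ⟨⟨hy, _⟩, hns⟩)
        · exact ⟨hy, fun hs => (Finset.mem_filter.mp (hS hs)).2 h⟩
        · exact ⟨hy, hns⟩
    have hdisj : Disjoint A (B \ S) := by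
      refine Finset.disjoint_left.mpr fun y hyA hyB => ?_
      have h1 := (Finset.mem_filter.mp hyA).2
      have h2 := (Finset.mem_filter.mp (Finset.mem_sdiff.mp hyB).1).2
      exact h2 h1
    unfold gfobWeight
    rw [← hY, hYS, Finset.prod_union hdisj]
    ring
  rw [Finset.sum_congr rfl hw, ← Finset.mul_sum, ← Finset.mul_sum,
    ← Finset.prod_add (fun y => 1 - ε y) ε B]
  simp
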